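/- Let $k$ be a field and $A$ a finite-dimensional graded-commutative connected Hopf algebra over $k$ (for instance the cohomology of a connected $H$-space with finite cohomology, with $k$ perfect). Then $A$ is a Poincaré duality algebra: if $n$ is the top nonzero degree, $A^n$ is one-dimensional and the multiplication pairing $A^i \times A^{n-i} \to A^n$ is perfect for all $i$. -/

import Mathlib

open scoped TensorProduct

noncomputable section

universe u v

namespace HopfPD

open Coalgebra TensorProduct

variable {k : Type u} [Field k] {B : Type v} [Ring B] [HopfAlgebra k B]

/-- The convolution product on `B →ₗ[k] B`. -/
def conv (f g : B →ₗ[k] B) : B →ₗ[k] B :=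
  LinearMap.mul' k B ∘ₗ TensorProduct.map f g ∘ₗ Coalgebra.comul

lemma conv_repr (f g : B →ₗ[k] B) (y : B) {ι : Type*} (r : Coalgebra.Repr k y ι) :
    conv f g y = ∑ i ∈ r.index, f (r.left i) * g (r.right i) := by
  simp only [conv, LinearMap.comp_apply, ← r.eq, map_sum, TensorProduct.map_tmul,
    LinearMap.mul'_apply]

lemma sum_counit_smul (y : B) {ι : Type*} (r : Coalgebra.Repr k y ι) :
    ∑ i ∈ r.index, Coalgebra.counit (R := k) (r.right i) • r.left i = y := by
  have h := congrArg (TensorProduct.rid k B) (Coalgebra.sum_tmul_counit_eq r)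
  rw [map_sum] at h
  simp only [TensorProduct.rid_tmul, one_smul] at h
  exact h

/-- The convolution unit `η ∘ ε`. -/
def cunit : B →ₗ[k] B :=
  Algebra.linearMap k B ∘ₗ Coalgebra.counit

lemma conv_cunit_right (f : B →ₗ[k] B) : conv f cunit = f := by
  ext y
  rw [conv_repr f cunit y (ℛ k y)]
  have : ∀ i ∈ (ℛ k y).index,
      f ((ℛ k y).left i) * (cunit : B →ₗ[k] B) ((ℛ k y).right i) =
        Coalgebra.counit (R := k) ((ℛ k y).right i) • f ((ℛ k y).left i) := by
    intro i _
    simp only [cunit, LinearMap.comp_apply, Algebra.linearMap_apply]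
    rw [← Algebra.commutes, ← Algebra.smul_def]
  rw [Finset.sum_congr rfl this]
  have := congrArg f (sum_counit_smul y (ℛ k y))
  simpa [map_sum] using this

lemma conv_id_antipode :
    conv (LinearMap.id : B →ₗ[k] B) (HopfAlgebra.antipode (R := k)) = cunit := by
  ext y
  have : TensorProduct.map (LinearMap.id : B →ₗ[k] B) (HopfAlgebra.antipode (R := k)) =
      (HopfAlgebra.antipode (R := k) (A := B)).lTensor B := rfl
  simp only [conv, LinearMap.comp_apply, this, cunit,
    HopfAlgebra.mul_antipode_lTensor_comul_apply, Algebra.linearMap_apply]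

lemma conv_assoc (f g h : B →ₗ[k] B) : conv (conv f g) h = conv f (conv g h) := by
  ext y
  set r := ℛ k y with hr
  set a₁ : ∀ i : r.ι, Coalgebra.Repr k (r.left i) (B × B) := fun i => ℛ k (r.left i) with ha₁
  set a₂ : ∀ i : r.ι, Coalgebra.Repr k (r.right i) (B × B) := fun i => ℛ k (r.right i) with ha₂
  have key := Coalgebra.sum_map_tmul_tmul_eq (R := k) f g h y (repr := r) (a₁ := a₁) (a₂ := a₂)
  have key2 := congrArg (LinearMap.mul' k B ∘ₗ
      (LinearMap.mul' k B).lTensor B) key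
  simp only [map_sum, LinearMap.comp_apply, LinearMap.lTensor_tmul,
    LinearMap.mul'_apply] at key2
  calc conv (conv f g) h y
      = ∑ i ∈ r.index, conv f g (r.left i) * h (r.right i) := conv_repr _ _ y r
    _ = ∑ i ∈ r.index, ∑ j ∈ (a₁ i).index,
          f ((a₁ i).left j) * (g ((a₁ i).right j) * h (r.right i)) := by
        refine Finset.sum_congr rfl fun i _ => ?_
        rw [conv_repr f g (r.left i) (a₁ i), Finset.sum_mul]
        exact Finset.sum_congr rfl fun j _ => mul_assoc _ _ _
    _ = ∑ i ∈ r.index, ∑ j ∈ (a₂ i).index,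
          f (r.left i) * (g ((a₂ i).left j) * h ((a₂ i).right j)) := key2.symm
    _ = ∑ i ∈ r.index, f (r.left i) * conv g h (r.right i) := by
        refine Finset.sum_congr rfl fun i _ => ?_
        rw [conv_repr g h (r.right i) (a₂ i), Finset.mul_sum]
    _ = conv f (conv g h) y := (conv_repr _ _ y r).symm

lemma conv_zero_left (g : B →ₗ[k] B) : conv (0 : B →ₗ[k] B) g = 0 := by
  ext y
  rw [conv_repr 0 g y (ℛ k y)]
  simp

lemma eq_zero_of_conv_id (T : B →ₗ[k] B) (h : conv T LinearMap.id = 0) : T = 0 := by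
  have h1 : conv T cunit = T := conv_cunit_right T
  rw [← h1, ← conv_id_antipode, ← conv_assoc, h, conv_zero_left]

section Graded

variable (𝒜 : ℕ → Submodule k B) [GradedAlgebra 𝒜]

/-- Projection onto the degree `m` part, valued in the submodule. -/
def projS (m : ℕ) : B →ₗ[k] 𝒜 m where
  toFun z := DirectSum.decompose 𝒜 z m
  map_add' x y := by
    dsimp only
    rw [DirectSum.decompose_add, DirectSum.add_apply]
  map_smul' c x := by
    dsimp only
    rw [DirectSum.decompose_smul, DirectSum.smul_apply, RingHom.id_apply]

/-- Projection onto the degree `m` part, as an endomorphism. -/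
def proj (m : ℕ) : B →ₗ[k] B :=
  (𝒜 m).subtype ∘ₗ projS 𝒜 m

lemma proj_of_mem_same {m : ℕ} {z : B} (hz : z ∈ 𝒜 m) : proj 𝒜 m z = z :=
  DirectSum.decompose_of_mem_same 𝒜 hz

lemma proj_of_mem_ne {i m : ℕ} {z : B} (hz : z ∈ 𝒜 i) (h : i ≠ m) : proj 𝒜 m z = 0 :=
  DirectSum.decompose_of_mem_ne 𝒜 hz h

end Graded

/-- `(φ ⊗ id)` followed by the left unitor. -/
def Nφ (φ : B →ₗ[k] k) : B ⊗[k] B →ₗ[k] B :=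
  (TensorProduct.lid k B).toLinearMap ∘ₗ φ.rTensor B

@[simp] lemma Nφ_tmul (φ : B →ₗ[k] k) (a b : B) : Nφ φ (a ⊗ₜ[k] b) = φ a • b := by
  simp [Nφ]

lemma counit_Nφ_comul (φ : B →ₗ[k] k) (z : B) :
    Coalgebra.counit (R := k) (Nφ φ (Coalgebra.comul z)) = φ z := by
  set r := ℛ k z with hr
  rw [← r.eq]
  have h1 : Coalgebra.counit (R := k) (Nφ φ (∑ i ∈ r.index, r.left i ⊗ₜ[k] r.right i)) =
      ∑ i ∈ r.index, φ (r.left i) * Coalgebra.counit (R := k) (r.right i) := by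
    simp [map_sum, smul_eq_mul]
  rw [h1]
  have h2 := congrArg φ (sum_counit_smul z r)
  simp only [map_sum, map_smul, smul_eq_mul] at h2
  rw [← h2]
  exact Finset.sum_congr rfl fun i _ => mul_comm _ _

section Main

variable (𝒜 : ℕ → Submodule k B) [GradedAlgebra 𝒜]

/-- The integral property: a functional supported in the top degree satisfies
`(φ ⊗ id) ∘ Δ = φ(·) • 1`. -/
lemma Nφ_comul_eq (hconn : 𝒜 0 = 1)
    (hΔ : ∀ m : ℕ, (𝒜 m).map (Coalgebra.comul (R := k) (A := B)) ≤
      ⨆ (q : ℕ × ℕ) (_ : q.1 + q.2 = m),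
        LinearMap.range (TensorProduct.map (𝒜 q.1).subtype (𝒜 q.2).subtype))
    (n : ℕ) (habove : ∀ m : ℕ, n < m → 𝒜 m = ⊥)
    (φ : B →ₗ[k] k) (hφ0 : ∀ j : ℕ, j ≠ n → ∀ z ∈ 𝒜 j, φ z = 0)
    (z : B) : Nφ φ (Coalgebra.comul z) = φ z • 1 := by
  have mem1 : ∀ w : B, Nφ φ (Coalgebra.comul w) ∈ (1 : Submodule k B) := by
    refine DirectSum.Decomposition.inductionOn 𝒜 (by simp) ?_ ?_
    · intro m zm
      rcases le_or_gt m n with hmn | hmn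
      · have hz : Coalgebra.comul (R := k) (zm : B) ∈
            ⨆ (q : ℕ × ℕ) (_ : q.1 + q.2 = m),
              LinearMap.range (TensorProduct.map (𝒜 q.1).subtype (𝒜 q.2).subtype) :=
          hΔ m (Submodule.mem_map_of_mem zm.2)
        have step : ∀ (q : ℕ × ℕ), ∀ w ∈ (⨆ (_ : q.1 + q.2 = m),
            LinearMap.range (TensorProduct.map (𝒜 q.1).subtype (𝒜 q.2).subtype)),
            Nφ φ w ∈ (1 : Submodule k B) := by
          intro q w hw
          by_cases hq : q.1 + q.2 = m
          · rw [iSup_pos hq] at hw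
            obtain ⟨u, rfl⟩ := hw
            induction u using TensorProduct.induction_on with
            | zero => simp
            | tmul a b =>
              simp only [TensorProduct.map_tmul, Submodule.coe_subtype, Nφ_tmul]
              by_cases hq1 : q.1 = n
              · have hq2 : q.2 = 0 := by omega
                have hb : (b : B) ∈ (1 : Submodule k B) := hconn ▸ (hq2 ▸ b.2)
                exact Submodule.smul_mem _ _ hb
              · rw [hφ0 q.1 hq1 a a.2, zero_smul]
                exact Submodule.zero_mem _
            | add u v hu hv =>
              rw [map_add, map_add]
              exact Submodule.add_mem _ hu hv
          · rw [iSup_neg hq] at hw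
            rw [Submodule.mem_bot] at hw
            rw [hw]
            simp
        exact Submodule.iSup_induction
          (motive := fun w => Nφ φ w ∈ (1 : Submodule k B)) _ hz step
          (by simp) (fun w₁ w₂ h₁ h₂ => by
            rw [map_add]; exact Submodule.add_mem _ h₁ h₂)
      · have h0 : (zm : B) = 0 :=
          (Submodule.eq_bot_iff _).mp (habove m hmn) _ zm.2
        rw [h0]
        simp
    · intro w₁ w₂ h₁ h₂
      rw [map_add, map_add]
      exact Submodule.add_mem _ h₁ h₂
  obtain ⟨c, hc⟩ := Submodule.mem_one.mp (mem1 z)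
  have hcz : c = φ z := by
    have := counit_Nφ_comul φ z
    rw [← hc] at this
    simpa using this
  rw [← hc, hcz, Algebra.algebraMap_eq_smul_one]

/-- Key nondegeneracy lemma: if `φ` is supported in top degree `n` and doesn't vanish on all
of `x * B`, then `x ≠ 0` -- contrapositive form. -/
lemma key_nondeg (hconn : 𝒜 0 = 1)
    (hΔ : ∀ m : ℕ, (𝒜 m).map (Coalgebra.comul (R := k) (A := B)) ≤
      ⨆ (q : ℕ × ℕ) (_ : q.1 + q.2 = m),
        LinearMap.range (TensorProduct.map (𝒜 q.1).subtype (𝒜 q.2).subtype))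
    (n : ℕ) (habove : ∀ m : ℕ, n < m → 𝒜 m = ⊥)
    (φ : B →ₗ[k] k) (hφ0 : ∀ j : ℕ, j ≠ n → ∀ z ∈ 𝒜 j, φ z = 0)
    (y₀ : B) (hy₀ : y₀ ∈ 𝒜 n) (hφy₀ : φ y₀ ≠ 0)
    (m : ℕ) (x : B) (hx : x ∈ 𝒜 m) (hann : ∀ a : B, φ (x * a) = 0) : x = 0 := by
  classical
  -- the "cap with x" operator
  set T : B →ₗ[k] B :=
    Nφ φ ∘ₗ LinearMap.mulLeft k (Coalgebra.comul (R := k) x) ∘ₗ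
      ((TensorProduct.mk k B B).flip (1 : B)) with hT
  have hTapp : ∀ y : B, T y = Nφ φ (Coalgebra.comul (R := k) x * (y ⊗ₜ[k] (1 : B))) := by
    intro y; rfl
  -- step 1 : mul' (map T id u) = Nφ φ (comul x * u)
  have L1 : ∀ u : B ⊗[k] B,
      LinearMap.mul' k B (TensorProduct.map T LinearMap.id u) =
        Nφ φ (Coalgebra.comul (R := k) x * u) := by
    have SL : ∀ (y z : B) (t : B ⊗[k] B),
        Nφ φ (t * (y ⊗ₜ[k] (1 : B))) * z = Nφ φ (t * (y ⊗ₜ[k] z)) := by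
      intro y z t
      induction t using TensorProduct.induction_on with
      | zero => simp
      | tmul a b =>
        rw [Algebra.TensorProduct.tmul_mul_tmul, Algebra.TensorProduct.tmul_mul_tmul]
        simp [smul_mul_assoc, mul_assoc]
      | add t₁ t₂ h₁ h₂ =>
        rw [add_mul, add_mul, map_add, map_add, add_mul, h₁, h₂]
    intro u
    induction u using TensorProduct.induction_on with
    | zero => simp
    | tmul y z =>
      rw [TensorProduct.map_tmul, LinearMap.mul'_apply, LinearMap.id_apply, hTapp y, SL]
    | add u v hu hv =>
      rw [map_add, map_add, mul_add, map_add, hu, hv]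
  -- step 2 : conv T id = 0
  have c1 : conv T LinearMap.id = 0 := by
    ext y
    have : conv T LinearMap.id y =
        LinearMap.mul' k B (TensorProduct.map T LinearMap.id (Coalgebra.comul (R := k) y)) := rfl
    rw [this, L1, ← Bialgebra.comul_mul, Nφ_comul_eq 𝒜 hconn hΔ n habove φ hφ0, hann,
      zero_smul]
    rfl
  have hT0 : T = 0 := eq_zero_of_conv_id T c1
  -- step 3 : compute T y₀ = φ y₀ • x
  have CL : ∀ w ∈ (⨆ (q : ℕ × ℕ) (_ : q.1 + q.2 = m),
        LinearMap.range (TensorProduct.map (𝒜 q.1).subtype (𝒜 q.2).subtype)),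
      Nφ φ (w * (y₀ ⊗ₜ[k] (1 : B))) =
        φ y₀ • proj 𝒜 m (Nφ (Coalgebra.counit (R := k)) w) := by
    intro w hw
    have step : ∀ (q : ℕ × ℕ), ∀ w' ∈ (⨆ (_ : q.1 + q.2 = m),
        LinearMap.range (TensorProduct.map (𝒜 q.1).subtype (𝒜 q.2).subtype)),
        Nφ φ (w' * (y₀ ⊗ₜ[k] (1 : B))) =
          φ y₀ • proj 𝒜 m (Nφ (Coalgebra.counit (R := k)) w') := by
      intro q w' hw'
      by_cases hq : q.1 + q.2 = m
      · rw [iSup_pos hq] at hw'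
        obtain ⟨u, rfl⟩ := hw'
        induction u using TensorProduct.induction_on with
        | zero => simp
        | tmul a b =>
          rw [TensorProduct.map_tmul]
          rw [Algebra.TensorProduct.tmul_mul_tmul]
          simp only [Submodule.coe_subtype, Nφ_tmul, mul_one]
          rcases Nat.eq_zero_or_pos q.1 with hq1 | hq1
          · have hq2 : q.2 = m := by omega
            have hb : proj 𝒜 m (b : B) = (b : B) := proj_of_mem_same 𝒜 (hq2 ▸ b.2)
            have ha : (a : B) ∈ (1 : Submodule k B) := hconn ▸ (hq1 ▸ a.2)
            obtain ⟨c, hc⟩ := Submodule.mem_one.mp ha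
            rw [map_smul, hb, ← hc, ← Algebra.smul_def]
            rw [Bialgebra.counit_algebraMap]
            rw [map_smul, smul_smul, smul_eq_mul, mul_comm]
          · have hmul : (a : B) * y₀ ∈ 𝒜 (q.1 + n) := SetLike.mul_mem_graded a.2 hy₀
            have : (a : B) * y₀ = 0 := by
              have hb := habove (q.1 + n) (by omega)
              rw [hb] at hmul
              simpa using hmul
            rw [this, map_zero, zero_smul]
            have hb2 : proj 𝒜 m (b : B) = 0 := proj_of_mem_ne 𝒜 b.2 (by omega)
            rw [map_smul, hb2, smul_zero, smul_zero]
        | add u v hu hv =>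
          rw [map_add, add_mul, map_add, hu, hv, map_add, map_add, smul_add]
      · rw [iSup_neg hq] at hw'
        rw [Submodule.mem_bot] at hw'
        rw [hw']
        simp
    exact Submodule.iSup_induction
      (motive := fun w => Nφ φ (w * (y₀ ⊗ₜ[k] (1 : B))) =
        φ y₀ • proj 𝒜 m (Nφ (Coalgebra.counit (R := k)) w)) _ hw step
      (by simp) (fun w₁ w₂ h₁ h₂ => by
        rw [add_mul, map_add, h₁, h₂, map_add, map_add, smul_add])
  have hcm : Coalgebra.comul (R := k) x ∈
      ⨆ (q : ℕ × ℕ) (_ : q.1 + q.2 = m),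
        LinearMap.range (TensorProduct.map (𝒜 q.1).subtype (𝒜 q.2).subtype) :=
    hΔ m (Submodule.mem_map_of_mem hx)
  have hTy₀ : T y₀ = φ y₀ • x := by
    rw [hTapp y₀, CL _ hcm]
    have : Nφ (Coalgebra.counit (R := k)) (Coalgebra.comul (R := k) x) = x := by
      simp only [Nφ, LinearMap.comp_apply, Coalgebra.rTensor_counit_comul]
      simp
    rw [this, proj_of_mem_same 𝒜 hx]
  rw [hT0] at hTy₀
  simp only [LinearMap.zero_apply] at hTy₀
  rcases smul_eq_zero.mp hTy₀.symm with h | h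
  · exact absurd h hφy₀
  · exact h

end Main

end HopfPD

/-- A finite-dimensional graded-commutative connected graded Hopf algebra over a field (for
instance the cohomology of a connected `H`-space with finite cohomology) is a Poincaré duality
algebra: the top nonzero degree part is one-dimensional and the multiplication pairing
`A^i × A^{n-i} → A^n` is perfect. -/
theorem hopf_poincare_duality (k : Type u) [Field k] (B : Type v) [Ring B]
    [HopfAlgebra k B] (𝒜 : ℕ → Submodule k B) [GradedAlgebra 𝒜] [FiniteDimensional k B]
    -- connectedness: the degree-zero part is spanned by the unit
    (hconn : 𝒜 0 = 1)
    -- graded-commutativity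
    (hcomm : ∀ (i j : ℕ), ∀ x ∈ 𝒜 i, ∀ y ∈ 𝒜 j, x * y = ((-1 : ℤ) ^ (i * j)) • (y * x))
    -- the comultiplication respects the grading
    (hΔ : ∀ m : ℕ, (𝒜 m).map (Coalgebra.comul (R := k) (A := B)) ≤
      ⨆ (q : ℕ × ℕ) (_ : q.1 + q.2 = m),
        LinearMap.range (TensorProduct.map (𝒜 q.1).subtype (𝒜 q.2).subtype))
    (n : ℕ) (htop : 𝒜 n ≠ ⊥) (habove : ∀ m : ℕ, n < m → 𝒜 m = ⊥) :
    Module.finrank k (𝒜 n) = 1 ∧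
      ∀ i : ℕ, ∀ x ∈ 𝒜 i, x ≠ 0 → ∃ y ∈ 𝒜 (n - i), x * y ≠ 0 := by
  classical
  obtain ⟨x₀, hx₀mem, hx₀ne⟩ := Submodule.ne_bot_iff _ |>.mp htop
  -- a functional on `𝒜 n` not vanishing at `x₀`
  obtain ⟨ψ, hψ⟩ : ∃ ψ : Module.Dual k (𝒜 n), ψ ⟨x₀, hx₀mem⟩ ≠ 0 := by
    by_contra hcon
    push_neg at hcon
    have : (⟨x₀, hx₀mem⟩ : 𝒜 n) = 0 :=
      (Module.forall_dual_apply_eq_zero_iff k _).mp hcon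
    exact hx₀ne (by simpa using congrArg Subtype.val this)
  -- the top-degree functional on all of `B`
  set φ : B →ₗ[k] k := ψ ∘ₗ HopfPD.projS 𝒜 n with hφ
  have hφ0 : ∀ j : ℕ, j ≠ n → ∀ z ∈ 𝒜 j, φ z = 0 := by
    intro j hj z hz
    have : HopfPD.projS 𝒜 n z = 0 := by
      have := DirectSum.decompose_of_mem_ne 𝒜 hz hj
      exact Subtype.ext this
    simp [hφ, LinearMap.comp_apply, this]
  have hφmem : ∀ z (hz : z ∈ 𝒜 n), φ z = ψ ⟨z, hz⟩ := by
    intro z hz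
    have : HopfPD.projS 𝒜 n z = ⟨z, hz⟩ := by
      apply Subtype.ext
      exact DirectSum.decompose_of_mem_same 𝒜 hz
    simp [hφ, LinearMap.comp_apply, this]
  have hφx₀ : φ x₀ ≠ 0 := by rw [hφmem x₀ hx₀mem]; exact hψ
  -- the key nondegeneracy statement
  have key : ∀ (m : ℕ) (x : B), x ∈ 𝒜 m → (∀ a : B, φ (x * a) = 0) → x = 0 := fun m x hx h =>
    HopfPD.key_nondeg 𝒜 hconn hΔ n habove φ hφ0 x₀ hx₀mem hφx₀ m x hx h
  constructor
  · -- finrank (𝒜 n) = 1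
    have hinj : Function.Injective (φ ∘ₗ (𝒜 n).subtype) := by
      rw [← LinearMap.ker_eq_bot]
      rw [Submodule.eq_bot_iff]
      rintro ⟨z, hz⟩ hker
      simp only [LinearMap.mem_ker, LinearMap.comp_apply, Submodule.coe_subtype] at hker
      have hann : ∀ a : B, φ (z * a) = 0 := by
        refine DirectSum.Decomposition.inductionOn 𝒜 (by simp) ?_ ?_
        · intro j aj
          rcases Nat.eq_zero_or_pos j with hj | hj
          · have : (aj : B) ∈ (1 : Submodule k B) := hconn ▸ (hj ▸ aj.2)
            obtain ⟨c, hc⟩ := Submodule.mem_one.mp this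
            rw [← hc, ← Algebra.commutes, ← Algebra.smul_def, map_smul, hker, smul_zero]
          · have hmul : z * (aj : B) ∈ 𝒜 (n + j) := SetLike.mul_mem_graded hz aj.2
            have : z * (aj : B) = 0 := by
              have hb := habove (n + j) (by omega)
              rw [hb] at hmul
              simpa using hmul
            rw [this, map_zero]
        · intro a₁ a₂ h₁ h₂
          rw [mul_add, map_add, h₁, h₂, add_zero]
      have : z = 0 := key n z hz hann
      exact Subtype.ext this
    have h1 : Module.finrank k (𝒜 n) ≤ 1 := by
      have := LinearMap.finrank_le_finrank_of_injective hinj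
      simpa [Module.finrank_self] using this
    have h2 : 0 < Module.finrank k (𝒜 n) := by
      rw [Module.finrank_pos_iff]
      exact ⟨⟨⟨x₀, hx₀mem⟩, 0, fun hcon => hx₀ne (by simpa using congrArg Subtype.val hcon)⟩⟩
    omega
  · -- nondegeneracy of the pairing
    intro i x hx hxne
    -- i ≤ n
    have hin : i ≤ n := by
      by_contra hcon
      push_neg at hcon
      have := habove i hcon
      rw [this] at hx
      exact hxne (by simpa using hx)
    -- there is some a with φ (x * a) ≠ 0
    have : ¬ (∀ a : B, φ (x * a) = 0) := fun h => hxne (key i x hx h)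
    push_neg at this
    obtain ⟨a, ha⟩ := this
    -- replace a by its degree (n - i) component
    have hfilter : ∀ b : B, φ (x * b) = φ (x * HopfPD.proj 𝒜 (n - i) b) := by
      refine DirectSum.Decomposition.inductionOn 𝒜 (by simp) ?_ ?_
      · intro j bj
        by_cases hj : j = n - i
        · rw [HopfPD.proj_of_mem_same 𝒜 (hj ▸ bj.2)]
        · rw [HopfPD.proj_of_mem_ne 𝒜 bj.2 hj, mul_zero, map_zero]
          have hmul : x * (bj : B) ∈ 𝒜 (i + j) := SetLike.mul_mem_graded hx bj.2
          exact hφ0 (i + j) (by omega) _ hmul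
      · intro b₁ b₂ h₁ h₂
        rw [mul_add, map_add, h₁, h₂, map_add, mul_add, map_add]
    refine ⟨HopfPD.proj 𝒜 (n - i) a, ?_, ?_⟩
    · exact ((HopfPD.projS 𝒜 (n - i)) a).2
    · intro hcon
      apply ha
      rw [hfilter a, hcon, map_zero]
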